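/- Let s > 0 and let P satisfy H1. Fix x₀ > 0 and suppose ∫_{x₀}^∞ P(z)·z^{−1−2/s} dz = ∞ (the integral diverges). Then for no initial value γ₀ > 0 does there exist a positive solution γ of the Dyson–Schwinger ODE on the whole interval [x₀, ∞) with γ(x₀) = γ₀. -/

import Mathlib

open Real MeasureTheory Filter Set

noncomputable section

/-- `γ` is a positive solution of the Dyson–Schwinger ODE
`γ'(x) = (γ(x) + γ(x)² − P(x)) / (s·x·γ(x))` on the set `I`. -/
def IsDSSolution (s : ℝ) (P γ : ℝ → ℝ) (I : Set ℝ) : Prop :=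
  (∀ x ∈ I, 0 < γ x) ∧
    ∀ x ∈ I, HasDerivWithinAt γ ((γ x + (γ x) ^ 2 - P x) / (s * x * γ x)) I x

/-- Hypothesis H1: `P` is twice continuously differentiable on `[0,∞)`,
`P 0 = 0`, and `P x > 0` for `x > 0`. -/
def H1 (P : ℝ → ℝ) : Prop :=
  ContDiffOn ℝ 2 P (Set.Ici 0) ∧ P 0 = 0 ∧ ∀ x > (0 : ℝ), 0 < P x

/-- Hypothesis H2: `P` is strictly increasing on `[0,∞)`. -/
def H2 (P : ℝ → ℝ) : Prop := StrictMonoOn P (Set.Ici 0)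

/-- The nullcline `γ_c(x) = (√(1 + 4 P x) − 1)/2`. -/
def gammaC (P : ℝ → ℝ) (x : ℝ) : ℝ := (Real.sqrt (1 + 4 * P x) - 1) / 2

lemma ds_hasDerivAt (s : ℝ) (P γ : ℝ → ℝ) (x₀ : ℝ)
    (hd : ∀ x ∈ Ici x₀, HasDerivWithinAt γ ((γ x + γ x ^ 2 - P x)/(s * x * γ x)) (Ici x₀) x)
    {x : ℝ} (hx : x ∈ Ioi x₀) :
    HasDerivAt γ ((γ x + γ x ^ 2 - P x)/(s * x * γ x)) x :=
  (hd x (mem_Ici.2 (le_of_lt hx))).hasDerivAt (Ici_mem_nhds hx)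

lemma growth_bound (s : ℝ) (hs : 0 < s) (P γ : ℝ → ℝ) (x₀ : ℝ) (hx₀ : 0 < x₀)
    (hpos : ∀ x ∈ Ici x₀, 0 < γ x)
    (hd : ∀ x ∈ Ici x₀, HasDerivWithinAt γ ((γ x + γ x ^ 2 - P x)/(s * x * γ x)) (Ici x₀) x)
    (hPpos : ∀ x ∈ Ici x₀, 0 < P x) :
    ∀ x ∈ Ici x₀, γ x ≤ (1 + γ x₀) / x₀ ^ (1/s) * x ^ (1/s) := by
  have hγcont : ContinuousOn γ (Ici x₀) := fun x hx => (hd x hx).continuousWithinAt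
  have hxp : ∀ x ∈ Ici x₀, (0:ℝ) < x := fun x hx => lt_of_lt_of_le hx₀ hx
  set h : ℝ → ℝ := fun x => Real.log (1 + γ x) - 1/s * Real.log x with hh
  have h1p : ∀ x ∈ Ici x₀, (0:ℝ) < 1 + γ x := fun x hx => by linarith [hpos x hx]
  have hder : ∀ x ∈ Ioi x₀, HasDerivAt h
      ((0 + (γ x + γ x ^ 2 - P x)/(s * x * γ x)) / (1 + γ x) - 1/s * x⁻¹) x := by
    intro x hx
    have hγx := ds_hasDerivAt s P γ x₀ hd hx
    have h1 : HasDerivAt (fun y => Real.log (1 + γ y))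
        ((0 + (γ x + γ x ^ 2 - P x)/(s * x * γ x)) / (1 + γ x)) x :=
      ((hasDerivAt_const x (1:ℝ)).add hγx).log (ne_of_gt (h1p x (mem_Ici.2 (le_of_lt hx))))
    exact h1.sub ((Real.hasDerivAt_log (hxp x (mem_Ici.2 (le_of_lt hx))).ne').const_mul (1/s))
  have hderle : ∀ x ∈ Ioi x₀,
      (0 + (γ x + γ x ^ 2 - P x)/(s * x * γ x)) / (1 + γ x) - 1/s * x⁻¹ ≤ 0 := by
    intro x hx
    have hxx := hxp x (mem_Ici.2 (le_of_lt hx))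
    have hγ := hpos x (mem_Ici.2 (le_of_lt hx))
    have hP := hPpos x (mem_Ici.2 (le_of_lt hx))
    have h1 := h1p x (mem_Ici.2 (le_of_lt hx))
    have key : (γ x + γ x ^ 2 - P x)/(s * x * γ x) ≤ (1 + γ x)/(s * x) := by
      rw [div_le_div_iff₀ (by positivity) (by positivity)]
      nlinarith [mul_pos (mul_pos hs hxx) hP]
    have : (γ x + γ x ^ 2 - P x)/(s * x * γ x) / (1 + γ x) ≤ (1 + γ x)/(s * x) / (1 + γ x) :=
      (div_le_div_iff_of_pos_right h1).mpr key
    have heq : (1 + γ x)/(s * x) / (1 + γ x) = 1/s * x⁻¹ := by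
      field_simp
    rw [zero_add]
    linarith [this.trans_eq heq]
  have hA : AntitoneOn h (Ici x₀) := by
    apply antitoneOn_of_deriv_nonpos (convex_Ici x₀)
    · apply ContinuousOn.sub
      · exact ContinuousOn.log (continuousOn_const.add hγcont)
          (fun x hx => (h1p x hx).ne')
      · exact continuousOn_const.mul
          (Real.continuousOn_log.mono (fun x hx => (hxp x hx).ne'))
    · rw [interior_Ici]
      exact fun x hx => (hder x hx).differentiableAt.differentiableWithinAt
    · rw [interior_Ici]
      intro x hx
      rw [(hder x hx).deriv]
      exact hderle x hx
  intro x hx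
  have hxx := hxp x hx
  have h1 := h1p x hx
  have h10 := h1p x₀ (le_refl x₀)
  have hhle : h x ≤ h x₀ := hA (self_mem_Ici) hx hx
  have ex : x ^ (1/s) = Real.exp (1/s * Real.log x) := by
    rw [Real.rpow_def_of_pos hxx, mul_comm]
  have ex0 : x₀ ^ (1/s) = Real.exp (1/s * Real.log x₀) := by
    rw [Real.rpow_def_of_pos hx₀, mul_comm]
  have key : (1:ℝ) + γ x ≤ (1 + γ x₀) / x₀ ^ (1/s) * x ^ (1/s) := by
    calc (1:ℝ) + γ x = Real.exp (Real.log (1 + γ x)) := (Real.exp_log h1).symm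
      _ ≤ Real.exp (Real.log (1 + γ x₀) + (1/s * Real.log x - 1/s * Real.log x₀)) := by
          apply Real.exp_le_exp.2
          simp only [hh] at hhle; linarith
      _ = (1 + γ x₀) / x₀ ^ (1/s) * x ^ (1/s) := by
          rw [Real.exp_add, Real.exp_log h10, Real.exp_sub, ex, ex0]; ring
  linarith [hpos x hx]

lemma F_deriv (s : ℝ) (hs : 0 < s) (P γ : ℝ → ℝ) {x : ℝ} (hx : 0 < x) (hγ : 0 < γ x)
    (hγx : HasDerivAt γ ((γ x + γ x ^ 2 - P x)/(s * x * γ x)) x) :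
    HasDerivAt (fun y => y ^ (-(2/s)) * γ y ^ 2)
      (2/s * (x ^ ((-1:ℝ) - 2/s) * (γ x - P x))) x := by
  have hr : HasDerivAt (fun y : ℝ => y ^ (-(2/s))) (-(2/s) * x ^ (-(2/s) - 1)) x :=
    Real.hasDerivAt_rpow_const (Or.inl hx.ne')
  have hg2 : HasDerivAt (fun y => γ y ^ 2)
      ((2:ℕ) * γ x ^ 1 * ((γ x + γ x ^ 2 - P x)/(s * x * γ x))) x := hγx.pow 2
  have := hr.mul hg2
  refine this.congr_deriv ?_
  have e1 : x ^ ((-1:ℝ) - 2/s) = x ^ (-(2/s)) * x⁻¹ := by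
    rw [show (-1:ℝ) - 2/s = -(2/s) + (-1) by ring, Real.rpow_add hx, Real.rpow_neg_one]
  have e2 : x ^ (-(2/s) - 1) = x ^ (-(2/s)) * x⁻¹ := by
    rw [show -(2/s) - 1 = -(2/s) + (-1:ℝ) by ring, Real.rpow_add hx, Real.rpow_neg_one]
  rw [e1, e2]
  field_simp
  ring

theorem stmt_1 (s : ℝ) (hs : 0 < s) (P : ℝ → ℝ) (hP : H1 P) (x₀ : ℝ) (hx₀ : 0 < x₀)
    (hInt : ¬ MeasureTheory.IntegrableOn (fun z => P z / z ^ (1 + 2 / s)) (Set.Ici x₀)) :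
    ∀ γ₀ > (0 : ℝ), ¬ ∃ γ : ℝ → ℝ, IsDSSolution s P γ (Set.Ici x₀) ∧ γ x₀ = γ₀ := by
  rintro γ₀ hγ₀ ⟨γ, ⟨hpos, hd⟩, hinit⟩
  have hxp : ∀ x ∈ Ici x₀, (0:ℝ) < x := fun x hx => lt_of_lt_of_le hx₀ hx
  have hPpos : ∀ x ∈ Ici x₀, 0 < P x := fun x hx => hP.2.2 x (hxp x hx)
  have hγcont : ContinuousOn γ (Ici x₀) := fun x hx => (hd x hx).continuousWithinAt
  have hPcont : ContinuousOn P (Ici x₀) :=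
    (hP.1.continuousOn).mono (Ici_subset_Ici.2 hx₀.le)
  have hgrow := growth_bound s hs P γ x₀ hx₀ hpos hd hPpos
  set Cγ : ℝ := (1 + γ x₀) / x₀ ^ (1/s) with hCγ
  have hCγ0 : 0 < Cγ := by
    apply div_pos (by linarith [hpos x₀ self_mem_Ici]) (Real.rpow_pos_of_pos hx₀ _)
  set F : ℝ → ℝ := fun x => x ^ (-(2/s)) * γ x ^ 2 with hF
  set K : ℝ := Cγ * (s * x₀ ^ (-(1/s))) + s/2 * F x₀ with hK
  -- key bound: for all b ≥ x₀, ∫ z in x₀..b, z^(-1-2/s) * P z ≤ K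
  have keybound : ∀ b, x₀ ≤ b → (∫ z in x₀..b, z ^ ((-1:ℝ) - 2/s) * P z) ≤ K := by
    intro b hb
    have hIcc : Icc x₀ b ⊆ Ici x₀ := Icc_subset_Ici_self
    have hzpos : ∀ z ∈ Icc x₀ b, (0:ℝ) < z := fun z hz => hxp z (hIcc hz)
    -- continuity facts on Icc x₀ b
    have hcr : ∀ (p : ℝ), ContinuousOn (fun z : ℝ => z ^ p) (Icc x₀ b) := fun p =>
      ContinuousOn.rpow_const continuousOn_id (fun z hz => Or.inl (hzpos z hz).ne')
    have hcq : ContinuousOn (fun z => z ^ ((-1:ℝ) - 2/s) * γ z) (Icc x₀ b) :=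
      (hcr _).mul (hγcont.mono hIcc)
    have hcg : ContinuousOn (fun z => z ^ ((-1:ℝ) - 2/s) * P z) (Icc x₀ b) :=
      (hcr _).mul (hPcont.mono hIcc)
    have hcC : ContinuousOn (fun z => Cγ * z ^ ((-1:ℝ) - 1/s)) (Icc x₀ b) :=
      continuousOn_const.mul (hcr _)
    have hintq : IntervalIntegrable (fun z => z ^ ((-1:ℝ) - 2/s) * γ z) volume x₀ b := by
      rw [intervalIntegrable_iff_integrableOn_Icc_of_le hb]
      exact hcq.integrableOn_Icc
    have hintg : IntervalIntegrable (fun z => z ^ ((-1:ℝ) - 2/s) * P z) volume x₀ b := by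
      rw [intervalIntegrable_iff_integrableOn_Icc_of_le hb]
      exact hcg.integrableOn_Icc
    have hintC : IntervalIntegrable (fun z => Cγ * z ^ ((-1:ℝ) - 1/s)) volume x₀ b := by
      rw [intervalIntegrable_iff_integrableOn_Icc_of_le hb]
      exact hcC.integrableOn_Icc
    -- FTC
    have hFcont : ContinuousOn F (Icc x₀ b) :=
      (hcr _).mul ((hγcont.mono hIcc).pow 2)
    have hFd : ∀ x ∈ Ioo x₀ b, HasDerivWithinAt F
        (2/s * (x ^ ((-1:ℝ) - 2/s) * (γ x - P x))) (Ioi x) x := fun x hx =>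
      (F_deriv s hs P γ (hxp x (mem_Ici.2 (le_of_lt hx.1))) (hpos x (mem_Ici.2 (le_of_lt hx.1)))
        (ds_hasDerivAt s P γ x₀ hd hx.1)).hasDerivWithinAt
    have hfint : IntervalIntegrable
        (fun z => 2/s * (z ^ ((-1:ℝ) - 2/s) * (γ z - P z))) volume x₀ b := by
      rw [intervalIntegrable_iff_integrableOn_Icc_of_le hb]
      exact (continuousOn_const.mul ((hcr _).mul
        ((hγcont.mono hIcc).sub (hPcont.mono hIcc)))).integrableOn_Icc
    have hFTC : (∫ z in x₀..b, 2/s * (z ^ ((-1:ℝ) - 2/s) * (γ z - P z))) = F b - F x₀ :=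
      intervalIntegral.integral_eq_sub_of_hasDeriv_right_of_le hb hFcont hFd hfint
    set Iq : ℝ := ∫ z in x₀..b, z ^ ((-1:ℝ) - 2/s) * γ z with hIq
    set Ig : ℝ := ∫ z in x₀..b, z ^ ((-1:ℝ) - 2/s) * P z with hIg
    have hsplit : (∫ z in x₀..b, 2/s * (z ^ ((-1:ℝ) - 2/s) * (γ z - P z)))
        = 2/s * (Iq - Ig) := by
      rw [intervalIntegral.integral_const_mul]
      congr 1
      rw [hIq, hIg, ← intervalIntegral.integral_sub hintq hintg]
      apply intervalIntegral.integral_congr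
      intro z hz
      simp [mul_sub]
    have hFb : 0 ≤ F b := mul_nonneg (Real.rpow_nonneg (by linarith) _) (sq_nonneg _)
    have heq1 : 2/s * (Iq - Ig) = F b - F x₀ := by rw [← hsplit]; exact hFTC
    have hIgIq : Ig ≤ Iq + s/2 * F x₀ := by
      have h1 : Iq - Ig = s/2 * (F b - F x₀) := by
        field_simp at heq1 ⊢
        linarith
      nlinarith
    -- bound Iq
    have hmono : Iq ≤ ∫ z in x₀..b, Cγ * z ^ ((-1:ℝ) - 1/s) := by
      apply intervalIntegral.integral_mono_on hb hintq hintC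
      intro z hz
      have hz0 := hzpos z hz
      have hsplitz : z ^ ((-1:ℝ) - 1/s) = z ^ ((-1:ℝ) - 2/s) * z ^ (1/s) := by
        rw [← Real.rpow_add hz0]
        congr 1
        ring
      calc z ^ ((-1:ℝ) - 2/s) * γ z
          ≤ z ^ ((-1:ℝ) - 2/s) * (Cγ * z ^ (1/s)) := by
            apply mul_le_mul_of_nonneg_left (hgrow z (hIcc hz)) (Real.rpow_nonneg hz0.le _)
        _ = Cγ * z ^ ((-1:ℝ) - 1/s) := by rw [hsplitz]; ring
    have hintval : (∫ z in x₀..b, Cγ * z ^ ((-1:ℝ) - 1/s)) ≤ Cγ * (s * x₀ ^ (-(1/s))) := by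
      rw [intervalIntegral.integral_const_mul]
      apply mul_le_mul_of_nonneg_left _ hCγ0.le
      rw [integral_rpow (Or.inr ⟨by
        intro h
        have h1 : (0:ℝ) < 1/s := by positivity
        linarith, by
        rw [Set.uIcc_of_le hb]
        intro h
        exact absurd (hzpos 0 h) (lt_irrefl 0)⟩)]
      rw [show (-1:ℝ) - 1/s + 1 = -(1/s) by ring]
      have hb1 : 0 < b ^ (-(1/s)) := Real.rpow_pos_of_pos (lt_of_lt_of_le hx₀ hb) _
      have hx1 : 0 < x₀ ^ (-(1/s)) := Real.rpow_pos_of_pos hx₀ _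
      have heqd : (b ^ (-(1/s)) - x₀ ^ (-(1/s))) / (-(1/s))
          = s * (x₀ ^ (-(1/s)) - b ^ (-(1/s))) := by
        field_simp
        ring
      rw [heqd]
      nlinarith
    calc Ig ≤ Iq + s/2 * F x₀ := hIgIq
      _ ≤ Cγ * (s * x₀ ^ (-(1/s))) + s/2 * F x₀ := by linarith [hmono.trans hintval]
      _ = K := rfl
  -- the integrand equals z^(-1-2/s) * P z on Ici x₀
  have hident : ∀ z ∈ Ici x₀, P z / z ^ (1 + 2/s) = z ^ ((-1:ℝ) - 2/s) * P z := by
    intro z hz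
    have hz0 := hxp z hz
    rw [show ((-1:ℝ) - 2/s) = -(1 + 2/s) by ring, Real.rpow_neg hz0.le,
      div_eq_mul_inv, mul_comm]
  apply hInt
  have hIoi : IntegrableOn (fun z => P z / z ^ (1 + 2/s)) (Ioi x₀) volume := by
    apply integrableOn_Ioi_of_intervalIntegral_norm_bounded K x₀ ?_ (tendsto_id (α := ℝ)) ?_
    · intro i
      rcases le_or_gt x₀ i with hi | hi
      · apply IntegrableOn.mono_set _ Ioc_subset_Icc_self
        apply ContinuousOn.integrableOn_Icc
        apply ContinuousOn.div (hPcont.mono Icc_subset_Ici_self)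
        · exact ContinuousOn.rpow_const continuousOn_id
            (fun z hz => Or.inl (hxp z (Icc_subset_Ici_self hz)).ne')
        · exact fun z hz =>
            (Real.rpow_pos_of_pos (hxp z (Icc_subset_Ici_self hz)) _).ne'
      · simp only [id_eq]
        rw [Set.Ioc_eq_empty (not_lt.mpr hi.le)]
        exact integrableOn_empty
    · filter_upwards [eventually_ge_atTop x₀] with i hi
      have hEq : EqOn (fun z => ‖P z / z ^ (1 + 2/s)‖)
          (fun z => z ^ ((-1:ℝ) - 2/s) * P z) (Set.uIcc x₀ i) := by
        rw [Set.uIcc_of_le hi]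
        intro z hz
        have hz' : z ∈ Ici x₀ := Icc_subset_Ici_self hz
        simp only [Real.norm_eq_abs]
        rw [abs_of_nonneg (div_nonneg (hPpos z hz').le (Real.rpow_nonneg (hxp z hz').le _))]
        exact hident z hz'
      simp only [id_eq]
      rw [intervalIntegral.integral_congr hEq]
      exact keybound i hi
  rw [integrableOn_Ici_iff_integrableOn_Ioi]
  exact hIoi
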